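/- Let S be the sampled-data system that is the series connection of a Brunovsky normal form B and a complement C, i.e. x_{a,1} = f_a(x_a, x_b, v), x_{b,1} = w, with state (x_a, x_b) ∈ ℝ^{n_a} × ℝ^{n_b} and inputs (v, w) ∈ ℝ^{m_v} × ℝ^{n_b}, where f_a is smooth on an open set. If the system S is flat, then the complement C, i.e. the sampled-data system x_{a,1} = f_a(x_a, z) with state x_a ∈ ℝ^{n_a} and input z = (x_b, v) ∈ ℝ^{n_b + m_v}, is flat, too. -/

import Mathlib

/-- A trajectory of the sampled-data system `x₁ = f(x,u)` on the set `N`: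
`(x(i), u(i)) ∈ N` and `x(i+1) = f(x(i), u(i))` for all `i`. -/
def IsTrajectory {X U : Type*} (N : Set (X × U)) (f : X × U → X)
    (x : ℕ → X) (u : ℕ → U) : Prop :=
  ∀ i : ℕ, (x i, u i) ∈ N ∧ x (i + 1) = f (x i, u i)

/-- The window `Yᵢ := (yʲ(i+k))_{1≤j≤m, 0≤k≤rⱼ}` of an output sequence `y`. -/
def window {m : ℕ} (r : Fin m → ℕ) (y : ℕ → Fin m → ℝ) (i : ℕ) :
    (j : Fin m) → Fin (r j + 1) → ℝ :=
  fun j k => y (i + (k : ℕ)) j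

/-- `(r, O, Hx, Hu)` is a flat parametrization of the sampled-data system
`x₁ = f(x,u)` on `N` with `m` flat outputs: `O` is an open set of tuples
`(yʲ_k)_{1≤j≤m, 0≤k≤rⱼ}`, `Hx`, `Hu` are smooth on `O`, (i) every output
sequence with windows in `O` produces a trajectory, (ii) every trajectory
arises in this way, and (iii) distinct output sequences produce distinct
trajectories. -/
def IsFlatParam {X U : Type*} [NormedAddCommGroup X] [NormedSpace ℝ X]
    [NormedAddCommGroup U] [NormedSpace ℝ U] (m : ℕ)
    (N : Set (X × U)) (f : X × U → X) (r : Fin m → ℕ)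
    (O : Set ((j : Fin m) → Fin (r j + 1) → ℝ))
    (Hx : ((j : Fin m) → Fin (r j + 1) → ℝ) → X)
    (Hu : ((j : Fin m) → Fin (r j + 1) → ℝ) → U) : Prop :=
  IsOpen O ∧ ContDiffOn ℝ (⊤ : ℕ∞) Hx O ∧ ContDiffOn ℝ (⊤ : ℕ∞) Hu O ∧
  (∀ y : ℕ → Fin m → ℝ, (∀ i, window r y i ∈ O) →
    IsTrajectory N f (fun i => Hx (window r y i)) (fun i => Hu (window r y i))) ∧
  (∀ x u, IsTrajectory N f x u → ∃ y : ℕ → Fin m → ℝ,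
    (∀ i, window r y i ∈ O) ∧
    ∀ i, x i = Hx (window r y i) ∧ u i = Hu (window r y i)) ∧
  (∀ y y' : ℕ → Fin m → ℝ, (∀ i, window r y i ∈ O) →
    (∀ i, window r y' i ∈ O) →
    (∀ i, Hx (window r y i) = Hx (window r y' i) ∧
      Hu (window r y i) = Hu (window r y' i)) →
    y = y')

/-- A non-redundant flat parametrization: a flat parametrization whose total
number of coordinates `∑ⱼ (rⱼ + 1)` is minimal. -/
def IsMinimalFlatParam {X U : Type*} [NormedAddCommGroup X] [NormedSpace ℝ X]
    [NormedAddCommGroup U] [NormedSpace ℝ U] (m : ℕ)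
    (N : Set (X × U)) (f : X × U → X) (r : Fin m → ℕ)
    (O : Set ((j : Fin m) → Fin (r j + 1) → ℝ))
    (Hx : ((j : Fin m) → Fin (r j + 1) → ℝ) → X)
    (Hu : ((j : Fin m) → Fin (r j + 1) → ℝ) → U) : Prop :=
  IsFlatParam m N f r O Hx Hu ∧
  ∀ (r' : Fin m → ℕ) (O' : Set ((j : Fin m) → Fin (r' j + 1) → ℝ))
    (Hx' : ((j : Fin m) → Fin (r' j + 1) → ℝ) → X)
    (Hu' : ((j : Fin m) → Fin (r' j + 1) → ℝ) → U),
    IsFlatParam m N f r' O' Hx' Hu' →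
    (∑ j : Fin m, (r j + 1)) ≤ ∑ j : Fin m, (r' j + 1)

/-- The sampled-data system `x₁ = f(x,u)` on `N` is flat (with respect to
forward shifts) with `m` flat outputs: it admits a non-redundant flat
parametrization. -/
def IsFlat {X U : Type*} [NormedAddCommGroup X] [NormedSpace ℝ X]
    [NormedAddCommGroup U] [NormedSpace ℝ U] (m : ℕ)
    (N : Set (X × U)) (f : X × U → X) : Prop :=
  ∃ (r : Fin m → ℕ) (O : Set ((j : Fin m) → Fin (r j + 1) → ℝ))
    (Hx : ((j : Fin m) → Fin (r j + 1) → ℝ) → X)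
    (Hu : ((j : Fin m) → Fin (r j + 1) → ℝ) → U),
    IsMinimalFlatParam m N f r O Hx Hu

/-- If a system admits some flat parametrization, it admits a minimal one,
hence it is flat. -/
lemma isFlat_of_exists_param {X U : Type*} [NormedAddCommGroup X] [NormedSpace ℝ X]
    [NormedAddCommGroup U] [NormedSpace ℝ U] (m : ℕ)
    (N : Set (X × U)) (f : X × U → X)
    (h : ∃ (r : Fin m → ℕ) (O : Set ((j : Fin m) → Fin (r j + 1) → ℝ))
      (Hx : ((j : Fin m) → Fin (r j + 1) → ℝ) → X)
      (Hu : ((j : Fin m) → Fin (r j + 1) → ℝ) → U),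
      IsFlatParam m N f r O Hx Hu) :
    IsFlat m N f := by
  classical
  have hP : ∃ n : ℕ, ∃ r O Hx Hu,
      IsFlatParam m N f r O Hx Hu ∧ (∑ j : Fin m, (r j + 1)) = n := by
    obtain ⟨r, O, Hx, Hu, hp⟩ := h
    exact ⟨_, r, O, Hx, Hu, hp, rfl⟩
  obtain ⟨r, O, Hx, Hu, hp, hsum⟩ := Nat.find_spec hP
  refine ⟨r, O, Hx, Hu, hp, ?_⟩
  intro r' O' Hx' Hu' hp'
  rw [hsum]
  exact Nat.find_min' hP ⟨r', O', Hx', Hu', hp', rfl⟩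

/-- **Lemma al-01.**
Let `S` be the sampled-data system that is the series connection of a
Brunovsky normal form `B` and a complement `C`, i.e.
`x_{a,1} = f_a(x_a, x_b, v)`, `x_{b,1} = w`, with state
`(x_a, x_b) ∈ ℝ^{n_a} × ℝ^{n_b}` and inputs `(v, w) ∈ ℝ^{m_v} × ℝ^{n_b}`,
where `f_a` is smooth on an open set `Ω`.  If `S` is flat, then the
complement `C`, i.e. the sampled-data system `x_{a,1} = f_a(x_a, z)` with
state `x_a ∈ ℝ^{n_a}` and input `z = (x_b, v) ∈ ℝ^{n_b + m_v}`, is flat,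
too. -/
theorem stmt_8 (na nb mv : ℕ)
    (Ω : Set ((Fin na → ℝ) × (Fin nb → ℝ) × (Fin mv → ℝ))) (hΩ : IsOpen Ω)
    (fa : (Fin na → ℝ) × (Fin nb → ℝ) × (Fin mv → ℝ) → (Fin na → ℝ))
    (hfa : ContDiffOn ℝ (⊤ : ℕ∞) fa Ω)
    (hflatS : IsFlat (mv + nb)
      {p : ((Fin na → ℝ) × (Fin nb → ℝ)) × ((Fin mv → ℝ) × (Fin nb → ℝ)) |
        (p.1.1, p.1.2, p.2.1) ∈ Ω}
      (fun p => ((fa (p.1.1, p.1.2, p.2.1), p.2.2) :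
        (Fin na → ℝ) × (Fin nb → ℝ)))) :
    IsFlat (nb + mv)
      {p : (Fin na → ℝ) × ((Fin nb → ℝ) × (Fin mv → ℝ)) |
        (p.1, p.2.1, p.2.2) ∈ Ω}
      (fun p => fa (p.1, p.2.1, p.2.2)) := by
  obtain ⟨r, O, Hx, Hu, hmin⟩ := hflatS
  obtain ⟨hO, hHx, hHu, h1, h2, h3⟩ := hmin.1
  have hnm : nb + mv = mv + nb := Nat.add_comm nb mv
  set eC : Fin (nb + mv) → Fin (mv + nb) := Fin.cast hnm with heC
  set eS : Fin (mv + nb) → Fin (nb + mv) := Fin.cast hnm.symm with heS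
  set rC : Fin (nb + mv) → ℕ := fun j => r (eC j) with hrC
  set T : ((j : Fin (nb + mv)) → Fin (rC j + 1) → ℝ) →
      ((j : Fin (mv + nb)) → Fin (r j + 1) → ℝ) := fun Y j k => Y (eS j) k with hTdef
  have hT : ContDiff ℝ (⊤ : ℕ∞) T := by
    apply contDiff_pi.mpr
    intro j
    apply contDiff_pi.mpr
    intro k
    exact ((ContinuousLinearMap.proj (R := ℝ)
        (φ := fun k' : Fin (r j + 1) => ℝ) k).contDiff).comp
      ((ContinuousLinearMap.proj (R := ℝ)
        (φ := fun j' : Fin (nb + mv) => Fin (rC j' + 1) → ℝ) (eS j)).contDiff)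
  -- transported windows
  have hwin : ∀ (y : ℕ → Fin (nb + mv) → ℝ) (i : ℕ),
      T (window rC y i) = window r (fun n j => y n (eS j)) i := fun y i => rfl
  have hwin' : ∀ (yS : ℕ → Fin (mv + nb) → ℝ) (i : ℕ),
      T (window rC (fun n j => yS n (eC j)) i) = window r yS i := fun yS i => rfl
  apply isFlat_of_exists_param
  refine ⟨rC, T ⁻¹' O, fun Y => (Hx (T Y)).1,
    fun Y => ((Hx (T Y)).2, (Hu (T Y)).1), hO.preimage hT.continuous, ?_, ?_, ?_, ?_, ?_⟩
  · exact (contDiff_fst.comp_contDiffOn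
      (hHx.comp hT.contDiffOn (fun Y hY => hY)))
  · exact ContDiffOn.prodMk
      (contDiff_snd.comp_contDiffOn (hHx.comp hT.contDiffOn (fun Y hY => hY)))
      (contDiff_fst.comp_contDiffOn (hHu.comp hT.contDiffOn (fun Y hY => hY)))
  · -- (i) output sequences with windows in O give trajectories of C
    intro y hy i
    have hyS : ∀ i, window r (fun n j => y n (eS j)) i ∈ O := fun i => hy i
    obtain ⟨hmem, hrec⟩ := h1 (fun n j => y n (eS j)) hyS i
    exact ⟨hmem, congrArg Prod.fst hrec⟩
  · -- (ii) every trajectory of C arises this way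
    intro xa z htraj
    have htrajS : IsTrajectory
        {p : ((Fin na → ℝ) × (Fin nb → ℝ)) × ((Fin mv → ℝ) × (Fin nb → ℝ)) |
          (p.1.1, p.1.2, p.2.1) ∈ Ω}
        (fun p => ((fa (p.1.1, p.1.2, p.2.1), p.2.2) :
          (Fin na → ℝ) × (Fin nb → ℝ)))
        (fun i => (xa i, (z i).1)) (fun i => ((z i).2, (z (i + 1)).1)) := by
      intro i
      obtain ⟨hmem, hrec⟩ := htraj i
      exact ⟨hmem, by simp only; rw [hrec]⟩
    obtain ⟨yS, hyS, hxu⟩ := h2 _ _ htrajS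
    refine ⟨fun n j => yS n (eC j), fun i => hyS i, ?_⟩
    intro i
    obtain ⟨hxeq, hueq⟩ := hxu i
    constructor
    · exact congrArg Prod.fst hxeq
    · have h1' : (z i).1 = (Hx (window r yS i)).2 := congrArg Prod.snd hxeq
      have h2' : (z i).2 = (Hu (window r yS i)).1 := congrArg Prod.fst hueq
      exact Prod.ext h1' h2'
  · -- (iii) injectivity
    intro y y' hy hy' heq
    have hyS : ∀ i, window r (fun n j => y n (eS j)) i ∈ O := fun i => hy i
    have hyS' : ∀ i, window r (fun n j => y' n (eS j)) i ∈ O := fun i => hy' i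
    -- the second component of Hu is determined by Hx at the next step
    have hw : ∀ (yy : ℕ → Fin (nb + mv) → ℝ),
        (∀ i, window r (fun n j => yy n (eS j)) i ∈ O) →
        ∀ i, (Hu (window r (fun n j => yy n (eS j)) i)).2 =
          (Hx (window r (fun n j => yy n (eS j)) (i + 1))).2 := by
      intro yy hyy i
      have := (h1 (fun n j => yy n (eS j)) hyy i).2
      exact (congrArg Prod.snd this).symm
    have hxeq : ∀ i, Hx (window r (fun n j => y n (eS j)) i) =
        Hx (window r (fun n j => y' n (eS j)) i) := by
      intro i
      have hA : (Hx (window r (fun n j => y n (eS j)) i)).1 =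
          (Hx (window r (fun n j => y' n (eS j)) i)).1 := (heq i).1
      have hB : (Hx (window r (fun n j => y n (eS j)) i)).2 =
          (Hx (window r (fun n j => y' n (eS j)) i)).2 :=
        congrArg Prod.fst (heq i).2
      exact Prod.ext hA hB
    have key : ∀ i, Hx (window r (fun n j => y n (eS j)) i) =
        Hx (window r (fun n j => y' n (eS j)) i) ∧
        Hu (window r (fun n j => y n (eS j)) i) =
        Hu (window r (fun n j => y' n (eS j)) i) := by
      intro i
      refine ⟨hxeq i, ?_⟩
      have hB : (Hu (window r (fun n j => y n (eS j)) i)).1 =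
          (Hu (window r (fun n j => y' n (eS j)) i)).1 :=
        congrArg Prod.snd (heq i).2
      refine Prod.ext hB ?_
      rw [hw y hyS i, hw y' hyS' i, hxeq (i + 1)]
    have hfin := h3 _ _ hyS hyS' key
    funext n j
    exact congrFun (congrFun hfin n) (eC j)
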